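/- Let m > 0, l > 0, h > 0, set α₁ = (1 + √(1 + 4ml(ml+1)))/2 and c_h = (1/l⁴ + h/(2l⁶))^{1/2}, and define ψ₂(x) = (−x)^{α₁} e^{−c_h x²/(2h)} for x < 0. Then α₁(α₁ − 1) = ml(ml+1), α₁ > ml, and for every x < 0: −h² ψ₂''(x) + ( 1/l² + c_h² x² + h² ml(ml+1)/x² ) ψ₂(x) = E₂(h) ψ₂(x), where E₂(h) = 1/l² + (2α₁+1) c_h h; moreover E₂(h) > E₁(h) := 1/l² + (2ml+1) c_h h. -/

import Mathlib

private lemma rpow_neg_hasDerivAt (a : ℝ) {x : ℝ} (hx : x < 0) :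
    HasDerivAt (fun x : ℝ => (-x) ^ a) (a * (-x) ^ (a - 1) * (-1)) x := by
  have h1 : HasDerivAt (fun y : ℝ => y ^ a) (a * (-x) ^ (a - 1)) (-x) :=
    Real.hasDerivAt_rpow_const (Or.inl (neg_ne_zero.mpr hx.ne))
  exact h1.comp x (hasDerivAt_neg x)

private lemma expPart (c h : ℝ) (x : ℝ) :
    HasDerivAt (fun x : ℝ => Real.exp (-c * x ^ 2 / (2 * h)))
      (Real.exp (-c * x ^ 2 / (2 * h)) * (-c * (2 * x) / (2 * h))) x := by
  have h0 : HasDerivAt (fun x : ℝ => x ^ 2) (2 * x) x := by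
    simpa using hasDerivAt_pow 2 x
  exact ((h0.const_mul (-c)).div_const (2 * h)).exp

private lemma psi_hasDerivAt (a c h : ℝ) {x : ℝ} (hx : x < 0) :
    HasDerivAt (fun x : ℝ => (-x) ^ a * Real.exp (-c * x ^ 2 / (2 * h)))
      ((a * (-x) ^ (a - 1) * (-1)) * Real.exp (-c * x ^ 2 / (2 * h))
        + (-x) ^ a * (Real.exp (-c * x ^ 2 / (2 * h)) * (-c * (2 * x) / (2 * h)))) x :=
  (rpow_neg_hasDerivAt a hx).mul (expPart c h x)

theorem stmt_12 (m l h : ℝ) (hm : 0 < m) (hl : 0 < l) (hh : 0 < h)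
    (α₁ c E₁ E₂ : ℝ)
    (hα₁ : α₁ = (1 + Real.sqrt (1 + 4*m*l*(m*l + 1))) / 2)
    (hc : c = Real.sqrt (1/l^4 + h/(2*l^6)))
    (hE₁ : E₁ = 1/l^2 + (2*m*l + 1)*c*h)
    (hE₂ : E₂ = 1/l^2 + (2*α₁ + 1)*c*h)
    (ψ₂ : ℝ → ℝ)
    (hψ₂ : ψ₂ = fun x => (-x) ^ α₁ * Real.exp (-c * x^2 / (2*h))) :
    α₁ * (α₁ - 1) = m*l*(m*l + 1) ∧
    m*l < α₁ ∧
    (∀ x : ℝ, x < 0 →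
      -h^2 * deriv (deriv ψ₂) x
          + (1/l^2 + c^2 * x^2 + h^2 * m * l * (m*l + 1) / x^2) * ψ₂ x
        = E₂ * ψ₂ x) ∧
    E₁ < E₂ := by
  have hsq : Real.sqrt (1 + 4*m*l*(m*l + 1)) = 2*m*l + 1 := by
    rw [show (1 + 4*m*l*(m*l + 1)) = (2*m*l + 1)^2 by ring,
      Real.sqrt_sq (by positivity)]
  have ha : α₁ = m * l + 1 := by rw [hα₁, hsq]; ring
  subst ha
  have hcpos : 0 < c := by
    rw [hc]; positivity
  refine ⟨by ring, by linarith, ?_, by rw [hE₁, hE₂]; nlinarith⟩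
  intro x hx
  set a : ℝ := m * l + 1 with ha'
  -- first derivative formula on Iio 0
  have hd1 : ∀ y ∈ Set.Iio (0:ℝ), deriv ψ₂ y =
      (a * (-y) ^ (a - 1) * (-1)) * Real.exp (-c * y ^ 2 / (2 * h))
        + (-y) ^ a * (Real.exp (-c * y ^ 2 / (2 * h)) * (-c * (2 * y) / (2 * h))) := by
    intro y hy
    rw [hψ₂]
    exact (psi_hasDerivAt a c h hy).deriv
  have hev : deriv ψ₂ =ᶠ[nhds x] fun y =>
      (a * (-y) ^ (a - 1) * (-1)) * Real.exp (-c * y ^ 2 / (2 * h))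
        + (-y) ^ a * (Real.exp (-c * y ^ 2 / (2 * h)) * (-c * (2 * y) / (2 * h))) :=
    Filter.eventually_of_mem (Iio_mem_nhds hx) hd1
  have hD2 : deriv (deriv ψ₂) x = deriv (fun y =>
      (a * (-y) ^ (a - 1) * (-1)) * Real.exp (-c * y ^ 2 / (2 * h))
        + (-y) ^ a * (Real.exp (-c * y ^ 2 / (2 * h)) * (-c * (2 * y) / (2 * h)))) x :=
    hev.deriv_eq
  -- second derivative
  have hlin : HasDerivAt (fun y : ℝ => -c * (2 * y) / (2 * h)) (-c * (2 * 1) / (2 * h)) x :=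
    (((hasDerivAt_id x).const_mul 2).const_mul (-c)).div_const (2 * h)
  have hT1 : HasDerivAt (fun y : ℝ => (a * (-y) ^ (a - 1) * (-1)) * Real.exp (-c * y ^ 2 / (2 * h)))
      (((a * ((a - 1) * (-x) ^ (a - 1 - 1) * (-1))) * (-1)) * Real.exp (-c * x ^ 2 / (2 * h))
        + (a * (-x) ^ (a - 1) * (-1)) * (Real.exp (-c * x ^ 2 / (2 * h)) * (-c * (2 * x) / (2 * h)))) x :=
    (((rpow_neg_hasDerivAt (a - 1) hx).const_mul a).mul_const (-1)).mul (expPart c h x)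
  have hT2 : HasDerivAt (fun y : ℝ => (-y) ^ a * (Real.exp (-c * y ^ 2 / (2 * h)) * (-c * (2 * y) / (2 * h))))
      ((a * (-x) ^ (a - 1) * (-1)) * (Real.exp (-c * x ^ 2 / (2 * h)) * (-c * (2 * x) / (2 * h)))
        + (-x) ^ a * ((Real.exp (-c * x ^ 2 / (2 * h)) * (-c * (2 * x) / (2 * h))) * (-c * (2 * x) / (2 * h))
            + Real.exp (-c * x ^ 2 / (2 * h)) * (-c * (2 * 1) / (2 * h)))) x :=
    (rpow_neg_hasDerivAt a hx).mul ((expPart c h x).mul hlin)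
  have hD2' := (hT1.add hT2).deriv
  simp only [Pi.add_def] at hD2'
  rw [hD2, hD2']
  rw [hψ₂]
  simp only
  -- rpow reductions
  have hnx : (0:ℝ) < -x := by linarith
  have r1 : (-x) ^ (a - 1) = (-x) ^ (a - 1 - 1) * (-x) := by
    rw [← Real.rpow_add_one (ne_of_gt hnx)]; ring_nf
  have r2 : (-x) ^ a = (-x) ^ (a - 1 - 1) * (-x) * (-x) := by
    rw [← r1, ← Real.rpow_add_one (ne_of_gt hnx)]; ring_nf
  rw [r1, r2, hE₂, ha']
  have hx0 : x ≠ 0 := hx.ne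
  field_simp
  ring
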